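/- Let A be an m×n real matrix, b ∈ ℝᵐ, x ∈ ℝⁿ, and let x* ∈ ℝⁿ satisfy A x* ≤ b componentwise. Suppose γ > 0 satisfies the Hoffman-type bound (γ/2)·‖x − x*‖² ≤ ‖(Ax − b)₊‖². Then ‖(Ax − b)₊‖² + (γ/2)·‖x − x*‖² ≤ 2·⟨Aᵀ(Ax − b)₊, x − x*⟩. In particular, the function f(x) = (1/2)‖(Ax − b)₊‖², whose gradient is Aᵀ(Ax − b)₊, satisfies the quasi strong convexity condition f(x) − f(x*) ≤ ⟨∇f(x), x − x*⟩ − (γ/4)‖x − x*‖². (Remark: the hinge-squared loss of a feasible linear system satisfies Assumption 1.) -/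

import Mathlib

open Matrix BigOperators

/-- Reinterpret a plain vector as an element of Euclidean space. -/
noncomputable def toEuc {k : ℕ} (v : Fin k → ℝ) : EuclideanSpace ℝ (Fin k) := WithLp.toLp 2 v

/-- The componentwise positive part `(A x - b)₊` of the residual. -/
noncomputable def posRes {m n : ℕ} (A : Matrix (Fin m) (Fin n) ℝ) (b : Fin m → ℝ)
    (x : EuclideanSpace ℝ (Fin n)) : EuclideanSpace ℝ (Fin m) :=
  WithLp.toLp 2 (fun i => max 0 (A.mulVec x i - b i))

/-- The objective `f(x) = (1/2) ‖(A x - b)₊‖²`. -/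
noncomputable def hingeSq {m n : ℕ} (A : Matrix (Fin m) (Fin n) ℝ) (b : Fin m → ℝ)
    (x : EuclideanSpace ℝ (Fin n)) : ℝ :=
  (1 / 2) * ‖posRes A b x‖ ^ 2

/-- Remark: the hinge-squared loss of a feasible linear system satisfies
Assumption 1: if `A x* ≤ b` componentwise and `γ > 0` satisfies the Hoffman-type bound
`(γ/2) ‖x - x*‖² ≤ ‖(A x - b)₊‖²`, then
`‖(A x - b)₊‖² + (γ/2) ‖x - x*‖² ≤ 2 ⟨Aᵀ (A x - b)₊, x - x*⟩`; in particular
`f(x) = (1/2)‖(A x - b)₊‖²`, whose gradient at `x` is `Aᵀ (A x - b)₊`, satisfies the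
quasi strong convexity condition
`f(x) - f(x*) ≤ ⟨∇f(x), x - x*⟩ - (γ/4) ‖x - x*‖²`. -/
theorem hingeSq_quasi_strong_convexity {m n : ℕ} (A : Matrix (Fin m) (Fin n) ℝ)
    (b : Fin m → ℝ) (x xstar : EuclideanSpace ℝ (Fin n))
    (hfeas : ∀ i, A.mulVec xstar i ≤ b i)
    (γ : ℝ) (hγ : 0 < γ)
    (hhoffman : γ / 2 * ‖x - xstar‖ ^ 2 ≤ ‖posRes A b x‖ ^ 2) :
    ‖posRes A b x‖ ^ 2 + γ / 2 * ‖x - xstar‖ ^ 2 ≤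
        2 * (inner ℝ (toEuc (Aᵀ.mulVec (posRes A b x))) (x - xstar) : ℝ)
      ∧
    hingeSq A b x - hingeSq A b xstar ≤
        (inner ℝ (toEuc (Aᵀ.mulVec (posRes A b x))) (x - xstar) : ℝ)
          - γ / 4 * ‖x - xstar‖ ^ 2 := by
  set p : Fin m → ℝ := (posRes A b x).ofLp with hp
  have hinner : (inner ℝ (toEuc (Aᵀ.mulVec p)) (x - xstar) : ℝ)
      = ∑ i, p i * (A.mulVec x i - A.mulVec xstar i) := by
    simp only [PiLp.inner_apply, RCLike.inner_apply, conj_trivial, toEuc,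
      Matrix.mulVec, dotProduct, Matrix.transpose_apply]
    simp_rw [Finset.mul_sum]
    rw [Finset.sum_comm]
    congr 1
    ext i
    rw [← Finset.sum_sub_distrib, Finset.mul_sum]
    congr 1
    ext j
    have : (x - xstar) j = x j - xstar j := rfl
    rw [this]; ring
  have hnorm : ‖toEuc p‖ ^ 2 = ∑ i, p i * p i := by
    rw [← real_inner_self_eq_norm_sq]
    simp only [PiLp.inner_apply, toEuc, RCLike.inner_apply, conj_trivial]
  have hkey : ‖toEuc p‖ ^ 2 ≤ (inner ℝ (toEuc (Aᵀ.mulVec p)) (x - xstar) : ℝ) := by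
    rw [hinner, hnorm]
    apply Finset.sum_le_sum
    intro i _
    have hpi : p i = max 0 (A.mulVec x i - b i) := rfl
    rcases le_or_gt (A.mulVec x i - b i) 0 with h | h
    · have : p i = 0 := by rw [hpi]; exact max_eq_left h
      simp [this]
    · have hpe : p i = A.mulVec x i - b i := by rw [hpi]; exact max_eq_right h.le
      have hb : A.mulVec x i - b i ≤ A.mulVec x i - A.mulVec xstar i := by
        have := hfeas i; linarith
      have hpn : 0 ≤ p i := le_max_left _ _
      calc p i * p i = p i * (A.mulVec x i - b i) := by rw [hpe]
        _ ≤ p i * (A.mulVec x i - A.mulVec xstar i) :=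
            mul_le_mul_of_nonneg_left hb hpn
  have hpe' : ‖posRes A b x‖ = ‖toEuc p‖ := rfl
  have hstar : posRes A b xstar = 0 := by
    ext i
    simp only [posRes]
    have := hfeas i
    exact max_eq_left (by linarith)
  constructor
  · rw [hpe'] at hhoffman ⊢
    linarith
  · have hfx : hingeSq A b x = (1/2) * ‖toEuc p‖ ^ 2 := rfl
    have hfs : hingeSq A b xstar = 0 := by
      simp [hingeSq, hstar]
    rw [hfx, hfs]
    rw [hpe'] at hhoffman
    linarith
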